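/- arXiv:2302.14304 — 2 statements merged into one kernel-verified Lean document; each statement's English description precedes it below -/
import Mathlib

section
/- For σ < −k − 1/2 (σ ∈ ℝ, k ∈ ℕ) there is a constant C = C(σ, k) such that for all a ≥ 0 and all h ∈ (0, 1]: ∫_{−π/h}^{π/h} (1 + a² + |h⁻¹(e^{−ihη} − 1)|²)^{σ} · |h⁻¹(e^{−ihη} − 1)|^{2k} dη ≤ C (1 + a²)^{σ + k + 1/2}. -/
open MeasureTheory

/-- The symbol of the discrete first divided difference: `ζ(η) = h⁻¹(e^{-ihη} - 1)`. -/
noncomputable def zeta1 (h η : ℝ) : ℂ :=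
  (h : ℂ)⁻¹ * (Complex.exp (-Complex.I * (h : ℂ) * (η : ℂ)) - 1)

lemma abs_zeta1 (h η : ℝ) (hh : 0 < h) :
    ‖zeta1 h η‖ = 2 / h * |Real.sin (h * η / 2)| := by
  have hθ : (-Complex.I * (h:ℂ) * (η:ℂ)) = ((-(h*η) : ℝ) : ℂ) * Complex.I := by
    push_cast; ring
  have hsq : (‖zeta1 h η‖)^2 = (2 / h * |Real.sin (h * η / 2)|)^2 := by
    rw [zeta1, hθ, norm_mul, mul_pow, Complex.sq_norm, Complex.sq_norm]
    have h1 : Complex.normSq ((h:ℂ)⁻¹) = (h^2)⁻¹ := by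
      simp [Complex.normSq_inv, Complex.normSq_ofReal, sq]
    have h2 : Complex.normSq (Complex.exp (((-(h*η) : ℝ) : ℂ) * Complex.I) - 1)
        = (Real.cos (h*η) - 1)^2 + (Real.sin (h*η))^2 := by
      rw [Complex.exp_mul_I, ← Complex.ofReal_cos, ← Complex.ofReal_sin]
      simp only [Complex.normSq_apply, Complex.sub_re, Complex.sub_im, Complex.add_re,
        Complex.add_im, Complex.one_re, Complex.one_im, Complex.mul_re, Complex.mul_im,
        Complex.I_re, Complex.I_im, Complex.ofReal_re, Complex.ofReal_im,
        Real.cos_neg, Real.sin_neg]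
      ring
    rw [h1, h2]
    have h3 : Real.sin (h*η/2)^2 = 1/2 - Real.cos (h*η) / 2 := by
      have := Real.sin_sq_eq_half_sub (h*η/2)
      rwa [show 2 * (h*η/2) = h*η by ring] at this
    rw [mul_pow, sq_abs, h3]
    have hc := Real.sin_sq_add_cos_sq (h*η)
    field_simp
    nlinarith [hc]
  have h0 : (0:ℝ) ≤ ‖zeta1 h η‖ := norm_nonneg _
  have h0' : (0:ℝ) ≤ 2 / h * |Real.sin (h * η / 2)| := by positivity
  nlinarith [hsq]

lemma jordan_abs {x : ℝ} (hx : |x| ≤ Real.pi / 2) : 2 / Real.pi * |x| ≤ |Real.sin x| := by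
  rcases le_or_gt 0 x with h | h
  · rw [abs_of_nonneg h] at hx ⊢
    have hs := Real.mul_le_sin h hx
    rw [abs_of_nonneg (le_trans (by positivity) hs)]
    exact hs
  · rw [abs_of_neg h] at hx ⊢
    have hs := Real.mul_le_sin (by linarith) hx
    rw [Real.sin_neg] at hs
    have hsle : Real.sin x ≤ 0 := by
      apply Real.sin_nonpos_of_nonpos_of_neg_pi_le h.le
      nlinarith [Real.pi_pos]
    rw [abs_of_nonpos hsle]
    linarith

set_option maxHeartbeats 1000000 in
/-- For `σ < -k - 1/2` there is `C = C(σ,k)` such that for all `a ≥ 0`, `h ∈ (0,1]`: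
`∫_{-π/h}^{π/h} (1 + a² + |h⁻¹(e^{-ihη}-1)|²)^σ |h⁻¹(e^{-ihη}-1)|^{2k} dη
  ≤ C (1 + a²)^{σ+k+1/2}`. -/
theorem scalar_weight_integral_estimate (σ : ℝ) (k : ℕ) (hσ : σ < -(k : ℝ) - 1 / 2) :
    ∃ C : ℝ, 0 < C ∧
      ∀ a : ℝ, 0 ≤ a → ∀ h : ℝ, 0 < h → h ≤ 1 →
        ∫ η in Set.Icc (-(Real.pi / h)) (Real.pi / h),
            (1 + a ^ 2 + ‖zeta1 h η‖ ^ 2) ^ σ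
              * ‖zeta1 h η‖ ^ (2 * k)
          ≤ C * (1 + a ^ 2) ^ (σ + (k : ℝ) + 1 / 2) := by
  have pi_pos := Real.pi_pos
  set F : ℝ → ℝ := fun t => (1 + t^2) ^ σ * t ^ (2*k) with hF
  have hFcont : Continuous F := by
    apply Continuous.mul
    · exact (continuous_const.add (continuous_pow 2)).rpow_const
        (fun x => Or.inl (by simp only [Pi.add_apply]; positivity))
    · exact continuous_pow _
  have hFnonneg : ∀ t, 0 ≤ F t := by
    intro t
    have : (0:ℝ) ≤ t ^ (2*k) := by rw [pow_mul]; positivity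
    positivity
  have hFint : Integrable F := by
    have hr : (Module.finrank ℝ ℝ : ℝ) < -2*(σ + k) := by
      simp only [Module.finrank_self, Nat.cast_one]
      linarith
    have hInt := integrable_rpow_neg_one_add_norm_sq (μ := volume) hr
    refine hInt.mono' hFcont.aestronglyMeasurable (Filter.Eventually.of_forall fun t => ?_)
    have h1 : (0:ℝ) < 1 + t^2 := by positivity
    rw [Real.norm_eq_abs, abs_of_nonneg (hFnonneg t)]
    have h2 : F t ≤ (1 + t^2) ^ (σ + k) := by
      have ht : t ^ (2*k) ≤ (1 + t^2)^k := by
        rw [pow_mul]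
        exact pow_le_pow_left₀ (by positivity) (by nlinarith) k
      calc F t ≤ (1 + t^2) ^ σ * (1 + t^2)^k :=
            mul_le_mul_of_nonneg_left ht (Real.rpow_nonneg h1.le σ)
        _ = (1 + t^2) ^ (σ + k) := by
            rw [Real.rpow_add h1, Real.rpow_natCast]
    calc F t ≤ (1 + t^2) ^ (σ + k) := h2
      _ = (1 + ‖t‖^2) ^ (-(-2*(σ+(k:ℝ))) / 2) := by
          rw [Real.norm_eq_abs, sq_abs]; ring_nf
  set I : ℝ := ∫ t, F t with hI
  have hInonneg : 0 ≤ I := integral_nonneg hFnonneg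
  refine ⟨(Real.pi/2)^(2*k+1) * I + 1, by positivity, ?_⟩
  intro a ha h hh hh1
  obtain ⟨s, hs⟩ : ∃ s : ℝ, s = Real.sqrt (1 + a^2) := ⟨_, rfl⟩
  have hs0 : 0 < s := hs ▸ Real.sqrt_pos.mpr (by positivity)
  have hs2 : s^2 = 1 + a^2 := hs ▸ Real.sq_sqrt (by positivity)
  have hs12 : s = (1 + a^2) ^ ((1:ℝ)/2) := by
    rw [hs, Real.sqrt_eq_rpow]
  obtain ⟨b, hb⟩ : ∃ b : ℝ, b = 2 / (Real.pi * s) := ⟨_, rfl⟩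
  have hb0 : 0 < b := by rw [hb]; positivity
  have hbs : b * (Real.pi * s) = 2 := by
    rw [hb]; field_simp
  set g : ℝ → ℝ := fun η => (1 + a^2 + (2/Real.pi)^2 * η^2) ^ σ * η ^ (2*k) with hg
  have hbase2 : ∀ η : ℝ, (0:ℝ) < 1 + a^2 + (2/Real.pi)^2 * η^2 := by
    intro η; positivity
  have hgnonneg : ∀ η, 0 ≤ g η := by
    intro η
    have h1 : (0:ℝ) ≤ η ^ (2*k) := by rw [pow_mul]; positivity
    have h0 := (hbase2 η).le
    rw [hg]
    positivity
  -- g in terms of F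
  have hb2 : b^2 * (1 + a^2) = (2/Real.pi)^2 := by
    have h4 := congrArg (fun x : ℝ => x^2) hbs
    simp only [mul_pow] at h4
    rw [← hs2]
    field_simp
    nlinarith [h4]
  have hgF : ∀ η : ℝ, g η = (1 + a^2) ^ σ * (s * Real.pi / 2)^(2*k) * F (b * η) := by
    intro η
    have hX : (1 + a^2) * (1 + (b*η)^2) = 1 + a^2 + (2/Real.pi)^2 * η^2 := by
      have : (b*η)^2 = b^2 * η^2 := by ring
      nlinarith [hb2]
    have e1 : (1 + a^2) ^ σ * (1 + (b*η)^2) ^ σ = (1 + a^2 + (2/Real.pi)^2*η^2) ^ σ := by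
      rw [← Real.mul_rpow (by positivity) (by positivity), hX]
    have e2 : (s * Real.pi / 2)^(2*k) * (b*η)^(2*k) = η^(2*k) := by
      rw [← mul_pow, ← mul_assoc, show s * Real.pi / 2 * b = 1 by
        rw [hb]; field_simp, one_mul]
    simp only [hg, hF]
    rw [← e1, ← e2]
    ring
  have hgint : Integrable g := by
    have hc := (hFint.comp_mul_left' hb0.ne').const_mul ((1 + a^2) ^ σ * (s * Real.pi / 2)^(2*k))
    refine hc.congr (Filter.Eventually.of_forall fun η => ?_)
    rw [hgF η]
  have hgval : ∫ η, g η = (Real.pi/2)^(2*k+1) * I * (1 + a^2) ^ (σ + (k:ℝ) + 1/2) := by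
    have h1 : ∫ η, g η = (1 + a^2) ^ σ * (s * Real.pi / 2)^(2*k) * ∫ η, F (b * η) := by
      simp_rw [hgF]
      rw [integral_const_mul]
    rw [h1, MeasureTheory.Measure.integral_comp_mul_left F b,
      abs_of_pos (inv_pos.mpr hb0), smul_eq_mul]
    have hbinv : b⁻¹ = Real.pi * s / 2 := by
      rw [hb]; field_simp
    rw [hbinv, ← hI]
    have hsk : s ^ (2*k) = (1 + a^2) ^ (k:ℝ) := by
      rw [pow_mul, hs2, ← Real.rpow_natCast]
    have key : (1 + a^2) ^ σ * (1 + a^2) ^ ((k:ℝ)) * (1 + a^2) ^ ((1:ℝ)/2)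
        = (1 + a^2) ^ (σ + (k:ℝ) + 1/2) := by
      rw [← Real.rpow_add (by positivity), ← Real.rpow_add (by positivity)]
    rw [show s * Real.pi / 2 = s * (Real.pi/2) by ring, mul_pow, hsk, pow_succ (Real.pi/2) (2*k), hs12]
    rw [← key]; ring
  -- pointwise comparison on the interval
  have hfint : IntegrableOn
      (fun η => (1 + a ^ 2 + ‖zeta1 h η‖ ^ 2) ^ σ
        * ‖zeta1 h η‖ ^ (2 * k))
      (Set.Icc (-(Real.pi/h)) (Real.pi/h)) := by
    apply Continuous.integrableOn_Icc
    have hzc : Continuous fun η : ℝ => ‖zeta1 h η‖ := by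
      apply continuous_norm.comp
      unfold zeta1
      fun_prop
    exact (((continuous_const (y := 1 + a ^ 2)).add (hzc.pow 2)).rpow_const
      (fun x => Or.inl (by simp only [Pi.add_apply, Pi.pow_apply]; positivity))).mul (hzc.pow _)
  have hmono : ∀ η ∈ Set.Icc (-(Real.pi/h)) (Real.pi/h),
      (1 + a ^ 2 + ‖zeta1 h η‖ ^ 2) ^ σ * ‖zeta1 h η‖ ^ (2 * k)
        ≤ g η := by
    intro η hη
    obtain ⟨hη1, hη2⟩ := hη
    have hηabs : |η| ≤ Real.pi / h := abs_le.mpr ⟨by linarith, hη2⟩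
    have hηh : h * |η| ≤ Real.pi := by
      rw [← le_div_iff₀' hh]
      exact hηabs
    have habs2 : |h * η / 2| = h * |η| / 2 := by
      rw [abs_div, abs_mul, abs_of_pos hh]
      norm_num
    have hx : |h*η/2| ≤ Real.pi/2 := by
      rw [habs2]; linarith
    have hlow : 2/Real.pi * |η| ≤ ‖zeta1 h η‖ := by
      rw [abs_zeta1 h η hh]
      have hj := jordan_abs hx
      have heq : 2/Real.pi * |η| = 2/h * (2/Real.pi * |h*η/2|) := by
        rw [habs2]; field_simp
      rw [heq]
      exact mul_le_mul_of_nonneg_left hj (by positivity)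
    have hup : ‖zeta1 h η‖ ≤ |η| := by
      rw [abs_zeta1 h η hh]
      calc 2/h * |Real.sin (h*η/2)| ≤ 2/h * |h*η/2| :=
            mul_le_mul_of_nonneg_left Real.abs_sin_le_abs (by positivity)
        _ = |η| := by rw [habs2]; field_simp
    have t1 : (1 + a^2 + ‖zeta1 h η‖^2)^σ
        ≤ (1 + a^2 + (2/Real.pi)^2*η^2)^σ := by
      apply Real.rpow_le_rpow_of_nonpos (hbase2 η) _ (by linarith : σ ≤ 0)
      have hsq : (2/Real.pi)^2 * η^2 ≤ ‖zeta1 h η‖^2 := by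
        have h0 : (0:ℝ) ≤ 2/Real.pi * |η| := by positivity
        calc (2/Real.pi)^2*η^2 = (2/Real.pi*|η|)^2 := by rw [mul_pow, sq_abs]
          _ ≤ _ := pow_le_pow_left₀ h0 hlow 2
      linarith
    have t2 : ‖zeta1 h η‖^(2*k) ≤ η^(2*k) := by
      calc ‖zeta1 h η‖^(2*k) ≤ |η|^(2*k) :=
            pow_le_pow_left₀ (norm_nonneg _) hup _
        _ = η^(2*k) := (even_two_mul k).pow_abs η
    have t3 : (0:ℝ) ≤ ‖zeta1 h η‖^(2*k) := by positivity
    have t4 : (0:ℝ) ≤ (1 + a^2 + (2/Real.pi)^2*η^2)^σ := Real.rpow_nonneg (hbase2 η).le σ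
    rw [hg]
    exact mul_le_mul t1 t2 t3 t4
  calc ∫ η in Set.Icc (-(Real.pi / h)) (Real.pi / h),
          (1 + a ^ 2 + ‖zeta1 h η‖ ^ 2) ^ σ * ‖zeta1 h η‖ ^ (2 * k)
      ≤ ∫ η in Set.Icc (-(Real.pi / h)) (Real.pi / h), g η :=
        setIntegral_mono_on hfint hgint.integrableOn measurableSet_Icc hmono
    _ ≤ ∫ η, g η := setIntegral_le_integral hgint (Filter.Eventually.of_forall hgnonneg)
    _ = (Real.pi/2)^(2*k+1) * I * (1 + a^2) ^ (σ + (k:ℝ) + 1/2) := hgval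
    _ ≤ ((Real.pi/2)^(2*k+1) * I + 1) * (1 + a^2) ^ (σ + (k:ℝ) + 1/2) := by
        have hp : (0:ℝ) < (1 + a^2) ^ (σ + (k:ℝ) + 1/2) :=
          Real.rpow_pos_of_pos (by positivity) _
        nlinarith [hp]
end

section
/- Let æ > 1 and γ > 1, and let A_≠ : ℝ² → ℂ satisfy c₁(1+|ξ|)^{æ} ≤ |A_≠(ξ)| ≤ c₂(1+|ξ|)^{æ} (so |A_≠⁻¹(ξ)A_≠(ξ₁,0)| ≤ (c₂/c₁)(1+|ξ₁|)^{æ}(1+|ξ|)^{−æ}), and let g̃ : ℝ → ℂ satisfy |g̃(ξ₁)| ≤ C_γ(1+|ξ₁|)^{−γ−æ}. Then for every h ∈ (0,1] and every x ∈ ℝ²: |∫_{ℝ²\[−π/h,π/h]²} e^{i x·ξ} A_≠⁻¹(ξ) A_≠(ξ₁, 0) g̃(ξ₁) dξ| ≤ C h^{β}, where β = min(æ − 1, γ − 1) > 0 and C depends only on c₁, c₂, C_γ, æ, γ. -/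
open MeasureTheory

open Set Real

lemma aux_lint_Ioi {p b : ℝ} (hp : 1 < p) (hb : 0 < b) :
    ∫⁻ t in Set.Ioi b, ENNReal.ofReal (t ^ (-p)) = ENNReal.ofReal (b ^ (1 - p) / (p - 1)) := by
  rw [← ofReal_integral_eq_lintegral_ofReal (integrableOn_Ioi_rpow_of_lt (by linarith) hb)
    (by filter_upwards [ae_restrict_mem measurableSet_Ioi] with t ht
        exact Real.rpow_nonneg (le_of_lt (hb.trans ht)) _)]
  rw [integral_Ioi_rpow_of_lt (by linarith) hb]
  congr 1
  rw [show -p + 1 = 1 - p by ring]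
  have h2 : (1:ℝ) - p ≠ 0 := by linarith
  have h3 : p - 1 ≠ 0 := by linarith
  field_simp
  ring

lemma aux_lint_Ioi_shift {p c R : ℝ} (hp : 1 < p) (hc : 0 < c) (hR : 0 ≤ R) :
    ∫⁻ t in Set.Ioi R, ENNReal.ofReal ((c + |t|) ^ (-p))
      = ENNReal.ofReal ((c + R) ^ (1 - p) / (p - 1)) := by
  have h1 : ∫⁻ t in Set.Ioi R, ENNReal.ofReal ((c + |t|) ^ (-p))
      = ∫⁻ t in Set.Ioi R, ENNReal.ofReal ((t + c) ^ (-p)) := by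
    refine setLIntegral_congr_fun measurableSet_Ioi (fun t ht => ?_)
    rw [abs_of_pos (lt_of_le_of_lt hR ht), add_comm]
  rw [h1]
  have hemb : MeasurableEmbedding (fun t : ℝ => t + c) :=
    (Homeomorph.addRight c).measurableEmbedding
  have hpre : (fun t : ℝ => t + c) ⁻¹' Set.Ioi (R + c) = Set.Ioi R := by
    ext t; simp
  have := (measurePreserving_add_right (volume : Measure ℝ) c).setLIntegral_comp_preimage_emb
    hemb (fun t => ENNReal.ofReal (t ^ (-p))) (Set.Ioi (R + c))
  rw [hpre] at this
  rw [this, aux_lint_Ioi hp (by linarith), add_comm R c]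

lemma aux_lint_abs_gt {p c R : ℝ} (hp : 1 < p) (hc : 0 < c) (hR : 0 ≤ R) :
    ∫⁻ t in {t : ℝ | R < |t|}, ENNReal.ofReal ((c + |t|) ^ (-p))
      ≤ ENNReal.ofReal (2 / (p - 1) * (c + R) ^ (1 - p)) := by
  have hset : {t : ℝ | R < |t|} = Set.Ioi R ∪ Set.Iio (-R) := by
    ext t
    simp only [Set.mem_setOf_eq, Set.mem_union, Set.mem_Ioi, Set.mem_Iio, lt_abs, lt_neg]
  rw [hset]
  refine le_trans (lintegral_union_le _ _ _) ?_
  have hneg : ∫⁻ t in Set.Iio (-R), ENNReal.ofReal ((c + |t|) ^ (-p))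
      = ∫⁻ t in Set.Ioi R, ENNReal.ofReal ((c + |t|) ^ (-p)) := by
    have hemb : MeasurableEmbedding (fun t : ℝ => -t) := (Homeomorph.neg ℝ).measurableEmbedding
    have hpre : (fun t : ℝ => -t) ⁻¹' Set.Iio (-R) = Set.Ioi R := by
      ext t; simp
    have := (Measure.measurePreserving_neg (volume : Measure ℝ)).setLIntegral_comp_preimage_emb
      hemb (fun t => ENNReal.ofReal ((c + |t|) ^ (-p))) (Set.Iio (-R))
    rw [hpre] at this
    simpa [abs_neg] using this.symm
  have hnn : 0 ≤ (c + R) ^ (1 - p) / (p - 1) :=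
    div_nonneg (Real.rpow_nonneg (by linarith) _) (by linarith)
  rw [hneg, aux_lint_Ioi_shift hp hc hR, ← ENNReal.ofReal_add hnn hnn]
  exact ENNReal.ofReal_le_ofReal (le_of_eq (by ring))

lemma aux_lint_full {p c : ℝ} (hp : 1 < p) (hc : 0 < c) :
    ∫⁻ t : ℝ, ENNReal.ofReal ((c + |t|) ^ (-p))
      ≤ ENNReal.ofReal (2 / (p - 1) * c ^ (1 - p)) := by
  have huniv : (Set.univ : Set ℝ) = {t : ℝ | 0 < |t|} ∪ {0} := by
    ext t
    simp only [Set.mem_univ, Set.mem_union, Set.mem_setOf_eq, Set.mem_singleton_iff, true_iff]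
    rcases eq_or_ne t 0 with h | h
    · exact Or.inr h
    · exact Or.inl (abs_pos.mpr h)
  calc ∫⁻ t : ℝ, ENNReal.ofReal ((c + |t|) ^ (-p))
      = ∫⁻ t in (Set.univ : Set ℝ), ENNReal.ofReal ((c + |t|) ^ (-p)) := by
        rw [setLIntegral_univ]
    _ ≤ (∫⁻ t in {t : ℝ | 0 < |t|}, ENNReal.ofReal ((c + |t|) ^ (-p)))
        + ∫⁻ t in ({0} : Set ℝ), ENNReal.ofReal ((c + |t|) ^ (-p)) := by
        rw [huniv]; exact lintegral_union_le _ _ _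
    _ ≤ ENNReal.ofReal (2 / (p - 1) * c ^ (1 - p)) + 0 := by
        gcongr
        · simpa using aux_lint_abs_gt hp hc le_rfl
        · rw [Measure.restrict_eq_zero.mpr (by simp), lintegral_zero_measure]
    _ = _ := by rw [add_zero]

lemma aux_meas (ae γ : ℝ) : Measurable (fun ξ : ℝ × ℝ =>
    ENNReal.ofReal ((1 + |ξ.1| + |ξ.2|) ^ (-ae) * (1 + |ξ.1|) ^ (-γ))) := by
  apply Measurable.ennreal_ofReal
  have c1 : Continuous fun ξ : ℝ × ℝ => 1 + |ξ.1| + |ξ.2| := by continuity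
  have c2 : Continuous fun ξ : ℝ × ℝ => 1 + |ξ.1| := by continuity
  exact ((c1.rpow_const fun ξ => Or.inl (by positivity)).mul
    (c2.rpow_const fun ξ => Or.inl (by positivity))).measurable

lemma region1 (ae γ : ℝ) (hae : 1 < ae) (hγ : 1 < γ) (R : ℝ) (hR : 0 ≤ R) :
    ∫⁻ ξ : ℝ × ℝ in {t : ℝ | R < |t|} ×ˢ Set.univ,
        ENNReal.ofReal ((1 + |ξ.1| + |ξ.2|) ^ (-ae) * (1 + |ξ.1|) ^ (-γ))
      ≤ ENNReal.ofReal (2 / (ae - 1) * (2 / (ae + γ - 2)) * (1 + R) ^ (2 - ae - γ)) := by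
  have hmeas := aux_meas ae γ
  rw [MeasureTheory.Measure.volume_eq_prod, ← Measure.restrict_prod_eq_prod_univ,
    lintegral_prod _ hmeas.aemeasurable]
  have inner : ∀ t : ℝ, ∫⁻ s : ℝ,
      ENNReal.ofReal ((1 + |t| + |s|) ^ (-ae) * (1 + |t|) ^ (-γ))
      ≤ ENNReal.ofReal (2 / (ae - 1) * (1 + |t|) ^ (-(ae + γ - 1))) := by
    intro t
    have hv : (0:ℝ) < 1 + |t| := by positivity
    calc ∫⁻ s : ℝ, ENNReal.ofReal ((1 + |t| + |s|) ^ (-ae) * (1 + |t|) ^ (-γ))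
        = ENNReal.ofReal ((1 + |t|) ^ (-γ))
            * ∫⁻ s : ℝ, ENNReal.ofReal (((1 + |t|) + |s|) ^ (-ae)) := by
          rw [← lintegral_const_mul' _ _ ENNReal.ofReal_ne_top]
          congr 1 with s
          rw [← ENNReal.ofReal_mul (by positivity)]
          exact congrArg ENNReal.ofReal (mul_comm _ _)
      _ ≤ ENNReal.ofReal ((1 + |t|) ^ (-γ))
            * ENNReal.ofReal (2 / (ae - 1) * (1 + |t|) ^ (1 - ae)) := by
          gcongr
          exact aux_lint_full hae hv
      _ = ENNReal.ofReal (2 / (ae - 1) * (1 + |t|) ^ (-(ae + γ - 1))) := by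
          rw [← ENNReal.ofReal_mul (Real.rpow_nonneg hv.le _)]
          congr 1
          rw [← mul_assoc, mul_comm ((1 + |t|) ^ (-γ)), mul_assoc,
            ← Real.rpow_add hv]
          congr 2
          ring
  calc ∫⁻ t in {t : ℝ | R < |t|}, ∫⁻ s : ℝ,
        ENNReal.ofReal ((1 + |t| + |s|) ^ (-ae) * (1 + |t|) ^ (-γ))
      ≤ ∫⁻ t in {t : ℝ | R < |t|},
          ENNReal.ofReal (2 / (ae - 1) * (1 + |t|) ^ (-(ae + γ - 1))) :=
        lintegral_mono fun t => inner t
    _ = ENNReal.ofReal (2 / (ae - 1))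
          * ∫⁻ t in {t : ℝ | R < |t|}, ENNReal.ofReal ((1 + |t|) ^ (-(ae + γ - 1))) := by
        rw [← lintegral_const_mul' _ _ ENNReal.ofReal_ne_top]
        congr 1 with t
        rw [← ENNReal.ofReal_mul (div_nonneg (by norm_num) (by linarith))]
    _ ≤ ENNReal.ofReal (2 / (ae - 1))
          * ENNReal.ofReal (2 / (ae + γ - 1 - 1) * (1 + R) ^ (1 - (ae + γ - 1))) := by
        gcongr
        exact aux_lint_abs_gt (by linarith) one_pos hR
    _ ≤ _ := by
        rw [← ENNReal.ofReal_mul (div_nonneg (by norm_num) (by linarith))]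
        apply ENNReal.ofReal_le_ofReal
        apply le_of_eq
        rw [show ae + γ - 1 - 1 = ae + γ - 2 by ring, show 1 - (ae + γ - 1) = 2 - ae - γ by ring]
        ring

lemma region2 (ae γ : ℝ) (hae : 1 < ae) (hγ : 1 < γ) (R : ℝ) (hR : 0 ≤ R) :
    ∫⁻ ξ : ℝ × ℝ in Set.univ ×ˢ {t : ℝ | R < |t|},
        ENNReal.ofReal ((1 + |ξ.1| + |ξ.2|) ^ (-ae) * (1 + |ξ.1|) ^ (-γ))
      ≤ ENNReal.ofReal (2 / (γ - 1) * (2 / (ae - 1)) * (1 + R) ^ (1 - ae)) := by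
  have hmeas := aux_meas ae γ
  rw [MeasureTheory.Measure.volume_eq_prod, ← Measure.prod_restrict, Measure.restrict_univ,
    lintegral_prod _ hmeas.aemeasurable]
  have inner : ∀ t : ℝ, ∫⁻ s in {s : ℝ | R < |s|},
      ENNReal.ofReal ((1 + |t| + |s|) ^ (-ae) * (1 + |t|) ^ (-γ))
      ≤ ENNReal.ofReal ((1 + |t|) ^ (-γ))
          * ENNReal.ofReal (2 / (ae - 1) * (1 + R) ^ (1 - ae)) := by
    intro t
    calc ∫⁻ s in {s : ℝ | R < |s|},
        ENNReal.ofReal ((1 + |t| + |s|) ^ (-ae) * (1 + |t|) ^ (-γ))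
        ≤ ∫⁻ s in {s : ℝ | R < |s|},
            ENNReal.ofReal ((1 + |t|) ^ (-γ)) * ENNReal.ofReal ((1 + |s|) ^ (-ae)) := by
          refine lintegral_mono fun s => ?_
          rw [← ENNReal.ofReal_mul (Real.rpow_nonneg (by positivity) _)]
          refine ENNReal.ofReal_le_ofReal ?_
          rw [mul_comm]
          exact mul_le_mul_of_nonneg_left
            (Real.rpow_le_rpow_of_nonpos (by positivity) (by linarith [abs_nonneg t])
              (by linarith))
            (Real.rpow_nonneg (by positivity) _)
      _ = ENNReal.ofReal ((1 + |t|) ^ (-γ))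
            * ∫⁻ s in {s : ℝ | R < |s|}, ENNReal.ofReal ((1 + |s|) ^ (-ae)) :=
          lintegral_const_mul' _ _ ENNReal.ofReal_ne_top
      _ ≤ _ := by
          gcongr
          exact aux_lint_abs_gt hae one_pos hR
  calc ∫⁻ t, ∫⁻ s in {s : ℝ | R < |s|},
        ENNReal.ofReal ((1 + |t| + |s|) ^ (-ae) * (1 + |t|) ^ (-γ))
      ≤ ∫⁻ t, ENNReal.ofReal ((1 + |t|) ^ (-γ))
          * ENNReal.ofReal (2 / (ae - 1) * (1 + R) ^ (1 - ae)) :=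
        lintegral_mono fun t => inner t
    _ = (∫⁻ t, ENNReal.ofReal ((1 + |t|) ^ (-γ)))
          * ENNReal.ofReal (2 / (ae - 1) * (1 + R) ^ (1 - ae)) :=
        lintegral_mul_const' _ _ ENNReal.ofReal_ne_top
    _ ≤ ENNReal.ofReal (2 / (γ - 1) * (1:ℝ) ^ (1 - γ))
          * ENNReal.ofReal (2 / (ae - 1) * (1 + R) ^ (1 - ae)) := by
        gcongr
        exact aux_lint_full hγ one_pos
    _ ≤ _ := by
        rw [Real.one_rpow, mul_one,
          ← ENNReal.ofReal_mul (div_nonneg (by norm_num) (by linarith))]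
        apply ENNReal.ofReal_le_ofReal
        apply le_of_eq
        ring

/-- Quantitative core of Theorem 4 (comparison of discrete and continuous solutions):
if `c₁(1+|ξ₁|+|ξ₂|)^æ ≤ |A_≠(ξ)| ≤ c₂(1+|ξ₁|+|ξ₂|)^æ` with `æ > 1`, and
`|g̃(ξ₁)| ≤ C_γ(1+|ξ₁|)^{-γ-æ}` with `γ > 1`, then the Fourier integral over the
complement of the period square is `O(h^β)` with `β = min(æ-1, γ-1)`, the constant
depending only on `c₁, c₂, C_γ, æ, γ`. -/
theorem discrete_continuous_comparison (ae γ c₁ c₂ Cγ : ℝ)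
    (hae : 1 < ae) (hγ : 1 < γ) (hc₁ : 0 < c₁) (hc₂ : 0 < c₂) (hCγ : 0 < Cγ)
    (A : ℝ × ℝ → ℂ) (hA : Measurable A)
    (hAbd : ∀ ξ : ℝ × ℝ,
      c₁ * (1 + |ξ.1| + |ξ.2|) ^ ae ≤ ‖A ξ‖
        ∧ ‖A ξ‖ ≤ c₂ * (1 + |ξ.1| + |ξ.2|) ^ ae)
    (g : ℝ → ℂ) (hg : Measurable g)
    (hgbd : ∀ t : ℝ, ‖g t‖ ≤ Cγ * (1 + |t|) ^ (-(γ + ae))) :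
    ∃ C : ℝ, 0 < C ∧
      ∀ h : ℝ, 0 < h → h ≤ 1 → ∀ x : ℝ × ℝ,
        ‖∫ ξ in {ξ : ℝ × ℝ | Real.pi / h < |ξ.1| ∨ Real.pi / h < |ξ.2|},
            Complex.exp (Complex.I * ((x.1 : ℂ) * (ξ.1 : ℂ) + (x.2 : ℂ) * (ξ.2 : ℂ)))
              * (A ξ)⁻¹ * A (ξ.1, 0) * g ξ.1‖
          ≤ C * h ^ (min (ae - 1) (γ - 1)) := by
  set β := min (ae - 1) (γ - 1) with hβ
  have hβpos : 0 < β := lt_min (by linarith) (by linarith)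
  set K₁ := c₂ * Cγ / c₁ with hK₁
  have hK₁pos : 0 < K₁ := by positivity
  set E₁ := 2 / (ae - 1) * (2 / (ae + γ - 2)) with hE₁
  set E₂ := 2 / (γ - 1) * (2 / (ae - 1)) with hE₂
  have hE₁pos : 0 < E₁ := by
    apply mul_pos <;> [skip; skip] <;> apply div_pos (by norm_num) (by linarith)
  have hE₂pos : 0 < E₂ := by
    apply mul_pos <;> [skip; skip] <;> apply div_pos (by norm_num) (by linarith)
  refine ⟨K₁ * (E₁ + E₂), by positivity, fun h h0 h1 x => ?_⟩
  set R := Real.pi / h with hRdef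
  have hR : 0 ≤ R := le_of_lt (div_pos Real.pi_pos h0)
  -- pointwise bound
  set F : ℝ × ℝ → ℂ := fun ξ =>
    Complex.exp (Complex.I * ((x.1 : ℂ) * (ξ.1 : ℂ) + (x.2 : ℂ) * (ξ.2 : ℂ)))
      * (A ξ)⁻¹ * A (ξ.1, 0) * g ξ.1 with hF
  set G : ℝ × ℝ → ℝ := fun ξ => (1 + |ξ.1| + |ξ.2|) ^ (-ae) * (1 + |ξ.1|) ^ (-γ) with hG
  have hpt : ∀ ξ : ℝ × ℝ, ‖F ξ‖ ≤ K₁ * G ξ := by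
    intro ξ
    have hu : (0:ℝ) < 1 + |ξ.1| + |ξ.2| := by positivity
    have hv : (0:ℝ) < 1 + |ξ.1| := by positivity
    have hexp : ‖Complex.exp (Complex.I * ((x.1 : ℂ) * (ξ.1 : ℂ) + (x.2 : ℂ) * (ξ.2 : ℂ)))‖
        = 1 := by
      rw [Complex.norm_exp]
      have : (Complex.I * ((x.1 : ℂ) * (ξ.1 : ℂ) + (x.2 : ℂ) * (ξ.2 : ℂ))).re = 0 := by
        simp [Complex.mul_re, Complex.add_re, Complex.mul_im]
      rw [this, Real.exp_zero]
    have hinv : ‖(A ξ)⁻¹‖ ≤ (c₁ * (1 + |ξ.1| + |ξ.2|) ^ ae)⁻¹ := by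
      rw [norm_inv]
      exact inv_anti₀ (by positivity) (hAbd ξ).1
    have hA0 : ‖A (ξ.1, 0)‖ ≤ c₂ * (1 + |ξ.1|) ^ ae := by
      have := (hAbd (ξ.1, 0)).2
      simpa using this
    have hgb : ‖g ξ.1‖ ≤ Cγ * (1 + |ξ.1|) ^ (-(γ + ae)) := hgbd ξ.1
    calc ‖F ξ‖ = ‖Complex.exp (Complex.I * ((x.1 : ℂ) * (ξ.1 : ℂ) + (x.2 : ℂ) * (ξ.2 : ℂ)))‖
          * ‖(A ξ)⁻¹‖ * ‖A (ξ.1, 0)‖ * ‖g ξ.1‖ := by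
          rw [hF]; simp only [norm_mul]
      _ = ‖(A ξ)⁻¹‖ * ‖A (ξ.1, 0)‖ * ‖g ξ.1‖ := by rw [hexp, one_mul]
      _ ≤ (c₁ * (1 + |ξ.1| + |ξ.2|) ^ ae)⁻¹ * (c₂ * (1 + |ξ.1|) ^ ae)
            * (Cγ * (1 + |ξ.1|) ^ (-(γ + ae))) := by
          gcongr
      _ = K₁ * G ξ := by
          have hv2 : (1 + |ξ.1|) ^ ae * (1 + |ξ.1|) ^ (-(γ + ae)) = (1 + |ξ.1|) ^ (-γ) := by
            rw [← Real.rpow_add hv]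
            congr 1
            ring
          rw [hK₁, hG, mul_inv, ← Real.rpow_neg hu.le]
          simp only []
          rw [← hv2]
          field_simp
  -- bounds for the negative powers of (1+R)
  have key : ∀ s : ℝ, β ≤ s → (1 + R) ^ (-s) ≤ h ^ β := by
    intro s hs
    have hs0 : 0 < s := lt_of_lt_of_le hβpos hs
    have hinvR : h⁻¹ ≤ 1 + R := by
      have h1R : 1 / h ≤ R := by
        rw [hRdef]
        gcongr
        linarith [Real.pi_gt_three]
      rw [inv_eq_one_div]
      linarith
    calc (1 + R) ^ (-s) ≤ (h⁻¹) ^ (-s) :=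
          Real.rpow_le_rpow_of_nonpos (inv_pos.mpr h0) hinvR (by linarith)
      _ = h ^ s := by
          rw [Real.inv_rpow h0.le, ← Real.rpow_neg h0.le, neg_neg]
      _ ≤ h ^ β := Real.rpow_le_rpow_of_exponent_ge h0 h1 hs
  have hβle : β ≤ ae - 1 := by rw [hβ]; exact min_le_left _ _
  have hb1 : (1 + R) ^ (2 - ae - γ) ≤ h ^ β := by
    rw [show (2 - ae - γ) = -(ae + γ - 2) by ring]
    exact key _ (by linarith)
  have hb2 : (1 + R) ^ (1 - ae) ≤ h ^ β := by
    rw [show (1 - ae) = -(ae - 1) by ring]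
    exact key _ hβle
  -- the set splits
  have hsub : {ξ : ℝ × ℝ | R < |ξ.1| ∨ R < |ξ.2|}
      = ({t : ℝ | R < |t|} ×ˢ (Set.univ : Set ℝ)) ∪ ((Set.univ : Set ℝ) ×ˢ {t : ℝ | R < |t|}) := by
    ext ξ
    simp [Set.mem_prod]
  -- main lintegral bound
  have L : ∫⁻ ξ in {ξ : ℝ × ℝ | R < |ξ.1| ∨ R < |ξ.2|}, ENNReal.ofReal ‖F ξ‖
      ≤ ENNReal.ofReal (K₁ * (E₁ + E₂) * h ^ β) := by
    calc ∫⁻ ξ in {ξ : ℝ × ℝ | R < |ξ.1| ∨ R < |ξ.2|}, ENNReal.ofReal ‖F ξ‖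
        ≤ ∫⁻ ξ in {ξ : ℝ × ℝ | R < |ξ.1| ∨ R < |ξ.2|}, ENNReal.ofReal (K₁ * G ξ) :=
          lintegral_mono fun ξ => ENNReal.ofReal_le_ofReal (hpt ξ)
      _ = ENNReal.ofReal K₁
            * ∫⁻ ξ in {ξ : ℝ × ℝ | R < |ξ.1| ∨ R < |ξ.2|}, ENNReal.ofReal (G ξ) := by
          rw [← lintegral_const_mul' _ _ ENNReal.ofReal_ne_top]
          congr 1 with ξ
          rw [← ENNReal.ofReal_mul hK₁pos.le]
      _ ≤ ENNReal.ofReal K₁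
            * (ENNReal.ofReal (E₁ * (1 + R) ^ (2 - ae - γ))
              + ENNReal.ofReal (E₂ * (1 + R) ^ (1 - ae))) := by
          gcongr
          rw [hsub]
          refine le_trans (lintegral_union_le _ _ _) ?_
          gcongr
          · simpa only [hG, hE₁] using region1 ae γ hae hγ R hR
          · simpa only [hG, hE₂] using region2 ae γ hae hγ R hR
      _ ≤ ENNReal.ofReal K₁ * ENNReal.ofReal ((E₁ + E₂) * h ^ β) := by
          gcongr
          rw [← ENNReal.ofReal_add (by positivity) (by positivity)]
          apply ENNReal.ofReal_le_ofReal
          have t1 : E₁ * (1 + R) ^ (2 - ae - γ) ≤ E₁ * h ^ β :=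
            mul_le_mul_of_nonneg_left hb1 hE₁pos.le
          have t2 : E₂ * (1 + R) ^ (1 - ae) ≤ E₂ * h ^ β :=
            mul_le_mul_of_nonneg_left hb2 hE₂pos.le
          calc E₁ * (1 + R) ^ (2 - ae - γ) + E₂ * (1 + R) ^ (1 - ae)
              ≤ E₁ * h ^ β + E₂ * h ^ β := add_le_add t1 t2
            _ = (E₁ + E₂) * h ^ β := by ring
      _ = ENNReal.ofReal (K₁ * (E₁ + E₂) * h ^ β) := by
          rw [← ENNReal.ofReal_mul hK₁pos.le, mul_assoc]
  -- conclude
  refine le_trans (norm_integral_le_lintegral_norm _) ?_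
  have hfin := ENNReal.toReal_mono ENNReal.ofReal_ne_top L
  rw [ENNReal.toReal_ofReal (by positivity)] at hfin
  exact hfin
end
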